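/- There exist constants c₁, c₂ > 0 such that for every integer r ≥ 2, writing p_i for the i-th prime number, N_r = p_1 + p_2 + ⋯ + p_r and P_r = p_1 · p_2 ⋯ p_r, one has 2^{c₁·√(N_r · log N_r)} ≤ P_r ≤ 2^{c₂·√(N_r · log N_r)}, where log denotes the natural logarithm and exponentiation is real exponentiation. -/

import Mathlib

open Real

/-- The sum of the first `r` prime numbers (so `primeSum 3 = 2 + 3 + 5`). -/
noncomputable def primeSum (r : ℕ) : ℕ :=
  ∑ i ∈ Finset.range r, Nat.nth Nat.Prime i

/-- The product of the first `r` prime numbers (so `primeProd 3 = 2 * 3 * 5`). -/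
noncomputable def primeProd (r : ℕ) : ℕ :=
  ∏ i ∈ Finset.range r, Nat.nth Nat.Prime i

open Finset
open scoped Nat.Prime


lemma log_le_four (x : ℝ) (hx : 1 ≤ x) : Real.log x ≤ 4 * Real.sqrt (Real.sqrt x) := by
  have h0 : (0:ℝ) ≤ x := by linarith
  have h1 : Real.log x = 4 * Real.log (Real.sqrt (Real.sqrt x)) := by
    rw [Real.log_sqrt (Real.sqrt_nonneg x), Real.log_sqrt h0]; ring
  have h2 : Real.log (Real.sqrt (Real.sqrt x)) ≤ Real.sqrt (Real.sqrt x) - 1 :=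
    Real.log_le_sub_one_of_pos (by positivity)
  nlinarith [Real.sqrt_nonneg (Real.sqrt x)]

lemma pi_card (n : ℕ) : (π n : ℕ) = #((Finset.range (n+1)).filter Nat.Prime) := by
  show Nat.count Nat.Prime (n+1) = _
  exact Nat.count_eq_card_filter_range _ _

lemma primes_interval_pow_le (m x : ℕ) (hmx : m ≤ x) :
    (m + 1) ^ ((π x : ℕ) - (π m : ℕ)) ≤ 4 ^ x := by
  set A := (Finset.range (x+1)).filter Nat.Prime with hA
  set B := (Finset.range (m+1)).filter Nat.Prime with hB
  have hBA : B ⊆ A := Finset.filter_subset_filter _ (Finset.range_subset_range.2 (by omega))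
  have hcard : (π x : ℕ) - (π m : ℕ) = #(A \ B) := by
    rw [Finset.card_sdiff_of_subset hBA, pi_card, pi_card]
  rw [hcard]
  calc (m+1) ^ #(A \ B) ≤ ∏ p ∈ A \ B, p := by
        apply Finset.pow_card_le_prod
        intro p hp
        simp only [Finset.mem_sdiff, hA, hB, Finset.mem_filter, Finset.mem_range] at hp
        rcases hp with ⟨⟨_, hp2⟩, hp3⟩
        by_contra hc
        exact hp3 ⟨by omega, hp2⟩
    _ ≤ ∏ p ∈ A, p := by
        apply Finset.prod_le_prod_of_subset_of_one_le' Finset.sdiff_subset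
        intro i hi _
        exact (Finset.mem_filter.1 hi).2.one_lt.le
    _ = primorial x := rfl
    _ ≤ 4 ^ x := primorial_le_4_pow x

set_option maxHeartbeats 1000000 in
lemma pi_upper {x : ℕ} (hx : 2^18 ≤ x) : ((π x : ℕ) : ℝ) ≤ 3 * x / Real.log x := by
  set m := Nat.sqrt x with hm
  have hmx : m ≤ x := Nat.sqrt_le_self x
  have hx1 : (1:ℝ) ≤ (x:ℝ) := by exact_mod_cast Nat.one_le_iff_ne_zero.2 (by omega)
  have hx0 : (0:ℝ) < (x:ℝ) := by linarith
  set a := Real.sqrt (x:ℝ) with ha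
  set b := Real.sqrt a with hb
  have ha0 : 0 < a := Real.sqrt_pos.2 hx0
  have ha2 : a^2 = (x:ℝ) := Real.sq_sqrt hx0.le
  have hb2 : b^2 = a := Real.sq_sqrt ha0.le
  have hb0 : 0 ≤ b := Real.sqrt_nonneg _
  have hbig : (262144:ℝ) ≤ (x:ℝ) := by
    have : (262144:ℕ) ≤ x := by norm_num at hx ⊢; omega
    exact_mod_cast this
  have ha484 : (484:ℝ) ≤ a := by
    rw [ha, show (484:ℝ) = Real.sqrt (484^2) by rw [Real.sqrt_sq]; norm_num]
    exact Real.sqrt_le_sqrt (by nlinarith)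
  have hb22 : (22:ℝ) ≤ b := by
    rw [hb, show (22:ℝ) = Real.sqrt (22^2) by rw [Real.sqrt_sq]; norm_num]
    exact Real.sqrt_le_sqrt (by nlinarith)
  -- m vs a
  have hm_up : (m:ℝ) ≤ a := by
    have h1 : (m:ℝ)^2 ≤ (x:ℝ) := by exact_mod_cast Nat.sqrt_le' x
    nlinarith [Nat.cast_nonneg (α := ℝ) m]
  have hm_lo : a ≤ (m:ℝ) + 1 := by
    have h1 : (x:ℝ) < ((m:ℝ)+1)^2 := by exact_mod_cast Nat.lt_succ_sqrt' x
    nlinarith [Nat.cast_nonneg (α := ℝ) m, Real.sqrt_nonneg (x:ℝ), ha2]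
  set L := Real.log (x:ℝ) with hLdef
  have hlogm : L / 2 ≤ Real.log ((m:ℝ)+1) := by
    have h1 : Real.log a ≤ Real.log ((m:ℝ)+1) := Real.log_le_log ha0 hm_lo
    have h2 : Real.log a = L / 2 := by rw [ha, Real.log_sqrt hx0.le, hLdef]
    linarith
  have hL12 : (12:ℝ) ≤ L := by
    have h1 : Real.log (262144:ℝ) ≤ L := Real.log_le_log (by norm_num) hbig
    have h2 : Real.log (262144:ℝ) = 18 * Real.log 2 := by
      rw [show (262144:ℝ) = 2^18 by norm_num, Real.log_pow]; norm_num
    nlinarith [Real.log_two_gt_d9]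
  have hL4b : L ≤ 4 * b := log_le_four (x:ℝ) hx1
  have hπm : ((π m : ℕ):ℝ) ≤ (m:ℝ) + 1 := by
    have : Nat.count Nat.Prime (m+1) ≤ m+1 := Nat.count_le _
    exact_mod_cast this
  have hπmono : (π m : ℕ) ≤ (π x : ℕ) := Nat.monotone_primeCounting hmx
  -- key log inequality
  have hkey : (((π x : ℕ):ℝ) - ((π m : ℕ):ℝ)) * Real.log ((m:ℝ)+1) ≤ (x:ℝ) * (2 * Real.log 2) := by
    have hN := primes_interval_pow_le m x hmx
    have hR : (((m:ℝ)+1)) ^ ((π x : ℕ) - (π m : ℕ)) ≤ (4:ℝ) ^ x := by exact_mod_cast hN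
    have hlog := Real.log_le_log (by positivity) hR
    rw [Real.log_pow, Real.log_pow] at hlog
    have h4 : Real.log 4 = 2 * Real.log 2 := by
      rw [show (4:ℝ) = 2^2 by norm_num, Real.log_pow]; norm_num
    rw [Nat.cast_sub hπmono, h4] at hlog
    exact_mod_cast hlog
  have hlog2 : Real.log 2 < 0.6931471808 := Real.log_two_lt_d9
  have hlog2' : (0:ℝ) < Real.log 2 := Real.log_pos (by norm_num)
  have hπsub : (0:ℝ) ≤ ((π x : ℕ):ℝ) - ((π m : ℕ):ℝ) := by
    have := hπmono; exact sub_nonneg.2 (by exact_mod_cast this)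
  rw [le_div_iff₀ (by linarith : (0:ℝ) < L)]
  have hx4 : (x:ℝ) = b^4 := by nlinarith
  nlinarith [mul_le_mul_of_nonneg_left hlogm hπsub,
    mul_le_mul_of_nonneg_right hπm (by linarith : (0:ℝ) ≤ L),
    mul_le_mul_of_nonneg_left hL4b (by nlinarith : (0:ℝ) ≤ (m:ℝ)+1),
    mul_le_mul_of_nonneg_right hlog2.le (by positivity : (0:ℝ) ≤ 2*(x:ℝ)),
    sq_nonneg b, sq_nonneg (b-22)]


lemma centralBinom_le_pow (n : ℕ) (hn : 0 < n) :
    Nat.centralBinom n ≤ (2*n) ^ ((π (2*n) : ℕ)) := by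
  have hne : Nat.centralBinom n ≠ 0 := (Nat.centralBinom_pos n).ne'
  have h2n : 0 < 2*n := by omega
  conv_lhs => rw [← Nat.factorization_prod_pow_eq_self hne]
  rw [Nat.prod_factorization_eq_prod_primeFactors]
  calc ∏ p ∈ (Nat.centralBinom n).primeFactors, p ^ (Nat.centralBinom n).factorization p
      ≤ ∏ _p ∈ (Nat.centralBinom n).primeFactors, 2*n := by
        apply Finset.prod_le_prod (fun _ _ => Nat.zero_le _)
        intro p _
        exact Nat.pow_factorization_choose_le h2n
    _ = (2*n) ^ #(Nat.centralBinom n).primeFactors := by rw [Finset.prod_const]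
    _ ≤ (2*n) ^ ((π (2*n) : ℕ)) := by
        apply Nat.pow_le_pow_right h2n
        have hsub : (Nat.centralBinom n).primeFactors ⊆
            (Finset.range (2*n+1)).filter Nat.Prime := by
          intro p hp
          have hpp := Nat.prime_of_mem_primeFactors hp
          have hν : (Nat.centralBinom n).factorization p ≠ 0 := by
            rwa [← Nat.support_factorization, Finsupp.mem_support_iff] at hp
          have hple : p ≤ 2*n := by
            calc p ≤ p ^ (Nat.centralBinom n).factorization p :=
                  Nat.le_self_pow hν p
              _ ≤ 2*n := Nat.pow_factorization_choose_le h2n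
          exact Finset.mem_filter.2 ⟨Finset.mem_range.2 (by omega), hpp⟩
        calc #(Nat.centralBinom n).primeFactors
            ≤ #((Finset.range (2*n+1)).filter Nat.Prime) := Finset.card_le_card hsub
          _ = (π (2*n) : ℕ) := by
              show _ = Nat.count Nat.Prime (2*n+1)
              rw [Nat.count_eq_card_filter_range]

lemma log_le_four' (x : ℝ) (hx : 1 ≤ x) : Real.log x ≤ 4 * Real.sqrt (Real.sqrt x) := by
  have h0 : (0:ℝ) ≤ x := by linarith
  have h1 : Real.log x = 4 * Real.log (Real.sqrt (Real.sqrt x)) := by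
    rw [Real.log_sqrt (Real.sqrt_nonneg x), Real.log_sqrt h0]; ring
  have h2 : Real.log (Real.sqrt (Real.sqrt x)) ≤ Real.sqrt (Real.sqrt x) - 1 :=
    Real.log_le_sub_one_of_pos (by positivity)
  nlinarith [Real.sqrt_nonneg (Real.sqrt x)]

set_option maxHeartbeats 1000000 in
lemma pi_lower {x : ℕ} (hx : 2^18 ≤ x) : (x : ℝ) / (2 * Real.log x) ≤ ((π x : ℕ) : ℝ) := by
  set n := x / 2 with hn
  have hn4 : 4 ≤ n := by omega
  have h2nx : 2*n ≤ x := by omega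
  have hx2n1 : x ≤ 2*n + 1 := by omega
  have hNat : 4^n < (2*n) ^ ((π (2*n) : ℕ) + 1) := by
    calc 4^n < n * Nat.centralBinom n := Nat.four_pow_lt_mul_centralBinom n hn4
      _ ≤ n * (2*n) ^ ((π (2*n) : ℕ)) :=
          Nat.mul_le_mul_left n (centralBinom_le_pow n (by omega))
      _ ≤ (2*n) * (2*n) ^ ((π (2*n) : ℕ)) := Nat.mul_le_mul_right _ (by omega)
      _ = (2*n) ^ ((π (2*n) : ℕ) + 1) := by rw [pow_succ]; ring
  -- real versions
  have hx1 : (1:ℝ) ≤ (x:ℝ) := by exact_mod_cast Nat.one_le_iff_ne_zero.2 (by omega)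
  have hx0 : (0:ℝ) < (x:ℝ) := by linarith
  set L := Real.log (x:ℝ) with hLdef
  set a := Real.sqrt (x:ℝ) with ha
  set b := Real.sqrt a with hb
  have ha0 : 0 < a := Real.sqrt_pos.2 hx0
  have ha2 : a^2 = (x:ℝ) := Real.sq_sqrt hx0.le
  have hb2 : b^2 = a := Real.sq_sqrt ha0.le
  have hb0 : 0 ≤ b := Real.sqrt_nonneg _
  have hbig : (262144:ℝ) ≤ (x:ℝ) := by
    have : (262144:ℕ) ≤ x := by norm_num at hx ⊢; omega
    exact_mod_cast this
  have ha484 : (484:ℝ) ≤ a := by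
    rw [ha, show (484:ℝ) = Real.sqrt (484^2) by rw [Real.sqrt_sq]; norm_num]
    exact Real.sqrt_le_sqrt (by nlinarith)
  have hb22 : (22:ℝ) ≤ b := by
    rw [hb, show (22:ℝ) = Real.sqrt (22^2) by rw [Real.sqrt_sq]; norm_num]
    exact Real.sqrt_le_sqrt (by nlinarith)
  have hx4 : (x:ℝ) = b^4 := by nlinarith
  have hL12 : (12:ℝ) ≤ L := by
    have h1 : Real.log (262144:ℝ) ≤ L := Real.log_le_log (by norm_num) hbig
    have h2 : Real.log (262144:ℝ) = 18 * Real.log 2 := by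
      rw [show (262144:ℝ) = 2^18 by norm_num, Real.log_pow]; norm_num
    nlinarith [Real.log_two_gt_d9]
  have hL4b : L ≤ 4 * b := log_le_four' (x:ℝ) hx1
  -- log of hNat
  have hR : (4:ℝ)^n ≤ ((2*n : ℕ):ℝ) ^ ((π (2*n) : ℕ) + 1) := by exact_mod_cast hNat.le
  have hlogN := Real.log_le_log (by positivity) hR
  rw [Real.log_pow, Real.log_pow] at hlogN
  have h4 : Real.log 4 = 2 * Real.log 2 := by
    rw [show (4:ℝ) = 2^2 by norm_num, Real.log_pow]; norm_num
  have hlog2n : Real.log ((2*n : ℕ):ℝ) ≤ L := by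
    apply Real.log_le_log (by positivity)
    exact_mod_cast h2nx
  have hlog2n0 : 0 ≤ Real.log ((2*n : ℕ):ℝ) := by
    apply Real.log_nonneg
    have : (1:ℕ) ≤ 2*n := by omega
    exact_mod_cast this
  have hπmono : (π (2*n) : ℕ) ≤ (π x : ℕ) := Nat.monotone_primeCounting h2nx
  have hstep : (n:ℝ) * (2 * Real.log 2) ≤ (((π x : ℕ):ℝ) + 1) * L := by
    calc (n:ℝ) * (2 * Real.log 2) = (n:ℝ) * Real.log 4 := by rw [h4]
      _ ≤ (((π (2*n) : ℕ):ℝ) + 1) * Real.log ((2*n : ℕ):ℝ) := by exact_mod_cast hlogN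
      _ ≤ (((π x : ℕ):ℝ) + 1) * L := by
          apply mul_le_mul _ hlog2n hlog2n0 (by positivity)
          have : ((π (2*n) : ℕ):ℝ) ≤ ((π x : ℕ):ℝ) := by exact_mod_cast hπmono
          linarith
  have hncast : ((x:ℝ) - 1) / 2 ≤ (n:ℝ) := by
    have : (x:ℝ) ≤ 2*(n:ℝ) + 1 := by exact_mod_cast hx2n1
    linarith
  have hlog2 : Real.log 2 > 0.6931471803 := Real.log_two_gt_d9
  have hlog2'' : Real.log 2 < 0.6931471808 := Real.log_two_lt_d9
  have hπ0 : (0:ℝ) ≤ ((π x : ℕ):ℝ) := Nat.cast_nonneg _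
  rw [div_le_iff₀ (by linarith : (0:ℝ) < 2*L)]
  nlinarith [mul_le_mul_of_nonneg_right hncast (by linarith : (0:ℝ) ≤ 2 * Real.log 2),
    mul_le_mul_of_nonneg_left hL4b (by linarith : (0:ℝ) ≤ (1:ℝ)),
    sq_nonneg b, sq_nonneg (b - 22), mul_le_mul_of_nonneg_right hL4b hb0]

lemma pi_nth (k : ℕ) : (π (Nat.nth Nat.Prime k) : ℕ) = k + 1 := by
  show Nat.count Nat.Prime (Nat.nth Nat.Prime k + 1) = k + 1
  rw [Nat.count_succ, if_pos (Nat.prime_nth_prime k),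
    Nat.count_nth_of_infinite Nat.infinite_setOf_prime]

set_option maxHeartbeats 2000000 in
lemma key {r : ℕ} (hr : 2^22 ≤ r) :
    Real.sqrt ((primeSum r : ℝ) * Real.log (primeSum r)) ≤ 23 * Real.log (primeProd r) ∧
    Real.log (primeProd r) ≤ 34 * Real.sqrt ((primeSum r : ℝ) * Real.log (primeSum r)) := by
  have hinf := Nat.infinite_setOf_prime
  set q := Nat.nth Nat.Prime (r-1) with hqdef
  have hπq : (π q : ℕ) = r := by rw [hqdef, pi_nth]; omega
  have hqr : r + 1 ≤ q := by
    have := Nat.add_two_le_nth_prime (r-1); omega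
  have hq22 : 2^22 ≤ q := by omega
  have hq18 : 2^18 ≤ q := by norm_num at hq22 ⊢; omega
  -- nat-level bounds
  have hqN : q ≤ primeSum r := by
    apply Finset.single_le_sum (f := fun i => Nat.nth Nat.Prime i)
      (fun i _ => Nat.zero_le _)
    exact Finset.mem_range.2 (by omega)
  have hNrq : primeSum r ≤ r * q := by
    calc primeSum r ≤ #(Finset.range r) • q := by
          apply Finset.sum_le_card_nsmul
          intro i hi
          exact Nat.nth_monotone hinf (by simp at hi; omega)
      _ = r * q := by simp [smul_eq_mul]
  set t := q / 16 with htdef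
  have ht18 : 2^18 ≤ t := by norm_num at hq22 ⊢; omega
  have hπt_le : (π t : ℕ) ≤ r := by
    rw [← hπq]; exact Nat.monotone_primeCounting (by omega)
  have hNlow : (r - (π t : ℕ)) * (t+1) ≤ primeSum r := by
    have h1 : ∀ i ∈ Finset.Ico (π t : ℕ) r, t + 1 ≤ Nat.nth Nat.Prime i := by
      intro i hi
      have hcount : Nat.count Nat.Prime (t+1) ≤ i := (Finset.mem_Ico.1 hi).1
      exact (Nat.count_le_iff_le_nth hinf).1 hcount
    calc (r - (π t : ℕ)) * (t+1) = #(Finset.Ico (π t : ℕ) r) • (t+1) := by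
          rw [Nat.card_Ico, smul_eq_mul]
      _ ≤ ∑ i ∈ Finset.Ico (π t : ℕ) r, Nat.nth Nat.Prime i :=
          Finset.card_nsmul_le_sum _ _ _ h1
      _ ≤ primeSum r := by
          apply Finset.sum_le_sum_of_subset
          intro i hi; simp at hi ⊢; omega
  set h := r / 2 with hhdef
  have hPlow : (h+2)^(r-h) ≤ primeProd r := by
    calc (h+2)^(r-h) = (h+2)^(#(Finset.Ico h r)) := by rw [Nat.card_Ico]
      _ ≤ ∏ i ∈ Finset.Ico h r, Nat.nth Nat.Prime i := by
          apply Finset.pow_card_le_prod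
          intro i hi
          have := Nat.add_two_le_nth_prime i
          simp at hi; omega
      _ ≤ primeProd r := by
          apply Finset.prod_le_prod_of_subset_of_one_le'
          · intro i hi; simp at hi ⊢; omega
          · intro i _ _; exact (Nat.prime_nth_prime i).one_lt.le
  have hPup : primeProd r ≤ q^r := by
    have := Finset.prod_le_pow_card (Finset.range r) (fun i => Nat.nth Nat.Prime i) q
      (fun i hi => Nat.nth_monotone hinf (by simp at hi; omega))
    simpa [primeProd] using this
  -- real part
  set N := (primeSum r : ℝ) with hNdef
  set P := (primeProd r : ℝ) with hPdef
  set R := (r : ℝ) with hRdef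
  set Q := (q : ℝ) with hQdef
  set T := (t : ℝ) with hTdef
  set LQ := Real.log Q with hLQdef
  set LR := Real.log R with hLRdef
  set LN := Real.log N with hLNdef
  set S := Real.log P with hSdef
  have hR0 : (2:ℝ)^22 ≤ R := by rw [hRdef]; exact_mod_cast hr
  have hR8 : (8:ℝ) ≤ R := by norm_num at hR0 ⊢; linarith
  have hQR : R + 1 ≤ Q := by rw [hRdef, hQdef]; exact_mod_cast hqr
  have hQ0 : (0:ℝ) < Q := by linarith
  have hbig : (262144:ℝ) ≤ Q := by
    have h262 : (262144:ℕ) ≤ q := by norm_num at hq18 ⊢; omega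
    rw [hQdef]; exact_mod_cast h262
  have hLQ12 : (12:ℝ) ≤ LQ := by
    have h1 : Real.log (262144:ℝ) ≤ LQ := Real.log_le_log (by norm_num) hbig
    have h2 : Real.log (262144:ℝ) = 18 * Real.log 2 := by
      rw [show (262144:ℝ) = 2^18 by norm_num, Real.log_pow]; norm_num
    nlinarith [Real.log_two_gt_d9]
  have hLR15 : (2:ℝ) ≤ LR := by
    have h1 : Real.log (4194304:ℝ) ≤ LR := by
      apply Real.log_le_log (by norm_num)
      norm_num at hR0 ⊢; linarith
    have h2 : Real.log (4194304:ℝ) = 22 * Real.log 2 := by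
      rw [show (4194304:ℝ) = 2^22 by norm_num, Real.log_pow]; norm_num
    nlinarith [Real.log_two_gt_d9]
  have hLR0 : (0:ℝ) < LR := by linarith
  -- Chebyshev at q
  have r1 : R ≤ 3 * Q / LQ := by
    have hu := pi_upper hq18
    rw [hπq] at hu
    rw [hRdef, hLQdef, hQdef]
    exact_mod_cast hu
  have r2 : Q / (2 * LQ) ≤ R := by
    have hl := pi_lower hq18
    rw [hπq] at hl
    rw [hRdef, hLQdef, hQdef]
    exact_mod_cast hl
  have r8 : R * LQ ≤ 3 * Q := by
    rw [le_div_iff₀ (by linarith : (0:ℝ) < LQ)] at r1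
    linarith
  have hQ2RLQ : Q ≤ 2 * R * LQ := by
    rw [div_le_iff₀ (by linarith : (0:ℝ) < 2 * LQ)] at r2
    linarith
  -- q ≤ R^4, LQ ≤ 4 LR
  have hQR4 : Q ≤ R^4 := by
    set u := Real.sqrt (Real.sqrt Q) with hudef
    have hu0 : 0 < u := by positivity
    have hu4 : u^4 = Q := by
      have h1 : (Real.sqrt Q)^2 = Q := Real.sq_sqrt hQ0.le
      have h2 : u^2 = Real.sqrt Q := Real.sq_sqrt (Real.sqrt_nonneg _)
      nlinarith only [h1, h2]
    have hLQu : LQ ≤ 4 * u := log_le_four' Q (by linarith)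
    have hu3 : u^3 ≤ 8 * R := by
      have : u^4 ≤ 2 * R * (4 * u) := by
        calc u^4 = Q := hu4
          _ ≤ 2 * R * LQ := hQ2RLQ
          _ ≤ 2 * R * (4 * u) := by
              apply mul_le_mul_of_nonneg_left hLQu (by linarith)
      nlinarith only [this, hu0]
    have huR : u ≤ R := by
      have hR2 : (64:ℝ) ≤ R^2 := by nlinarith only [hR8]
      have hR3 : 8*R ≤ R^3 := by nlinarith only [hR8, hR2]
      have hRc : u^3 ≤ R^3 := by linarith only [hu3, hR3]
      exact (pow_le_pow_iff_left₀ hu0.le (by linarith) (by norm_num)).1 hRc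
    calc Q = u^4 := hu4.symm
      _ ≤ R^4 := pow_le_pow_left₀ hu0.le huR 4
  have hLQ4LR : LQ ≤ 4 * LR := by
    have h1 : LQ ≤ Real.log (R^4) := Real.log_le_log hQ0 hQR4
    rw [Real.log_pow, ← hLRdef] at h1
    push_cast at h1
    linarith
  -- T facts
  have hT16 : T ≤ Q/16 := by
    rw [hTdef, hQdef, htdef]
    push_cast
    exact Nat.cast_div_le
  have hT_lo : Q/16 - 1 ≤ T := by
    have hq16 : q ≤ 16*t + 15 := by omega
    have hc : Q ≤ 16*T + 15 := by rw [hQdef, hTdef]; exact_mod_cast hq16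
    linarith
  have hT32 : Q/32 ≤ T := by linarith
  have hsqrtQ : Real.sqrt Q ≤ Q/32 := by
    have h32 : (32:ℝ) ≤ Real.sqrt Q := by
      rw [show (32:ℝ) = Real.sqrt (32^2) by rw [Real.sqrt_sq]; norm_num]
      exact Real.sqrt_le_sqrt (by norm_num; linarith)
    have hsq : Real.sqrt Q * Real.sqrt Q = Q := Real.mul_self_sqrt hQ0.le
    nlinarith only [h32, hsq, Real.sqrt_nonneg Q]
  have hT0 : (0:ℝ) < T := by linarith
  have hLT : LQ/2 ≤ Real.log T := by
    have h1 : Real.log (Real.sqrt Q) ≤ Real.log T :=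
      Real.log_le_log (Real.sqrt_pos.2 hQ0) (by linarith)
    rw [Real.log_sqrt hQ0.le, ← hLQdef] at h1
    linarith
  have r3 : ((π t : ℕ):ℝ) ≤ 3 * T / Real.log T := by
    have := pi_upper ht18
    rw [hTdef]
    exact_mod_cast this
  have hLT0 : (0:ℝ) < Real.log T := by linarith
  have r3' : ((π t : ℕ):ℝ) ≤ (3/8) * Q / LQ := by
    calc ((π t : ℕ):ℝ) ≤ 3*T/Real.log T := r3
      _ ≤ (3*(Q/16))/(LQ/2) := by
          apply div_le_div₀ (by positivity) (by linarith) (by linarith) hLT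
      _ = (3/8) * Q / LQ := by field_simp; ring
  have r4 : Q/(8*LQ) ≤ R - ((π t : ℕ):ℝ) := by
    have he : Q/(2*LQ) - (3/8)*Q/LQ = Q/(8*LQ) := by field_simp; ring
    linarith [r2, r3']
  have hNlowR : ((r - (π t:ℕ) : ℕ):ℝ) * (T+1) ≤ N := by
    rw [hNdef, hTdef]
    exact_mod_cast hNlow
  have hcastsub : ((r - (π t:ℕ) : ℕ):ℝ) = R - ((π t:ℕ):ℝ) := by
    rw [hRdef]; exact Nat.cast_sub hπt_le
  have r5 : Q^2/(128*LQ) ≤ N := by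
    have hQ16T1 : Q/16 ≤ T + 1 := by linarith
    have hsub0 : (0:ℝ) ≤ Q/(8*LQ) := by positivity
    calc Q^2/(128*LQ) = (Q/(8*LQ)) * (Q/16) := by field_simp; ring
      _ ≤ (R - ((π t:ℕ):ℝ)) * (T+1) :=
          mul_le_mul r4 hQ16T1 (by positivity) (by linarith)
      _ = ((r - (π t:ℕ) : ℕ):ℝ) * (T+1) := by rw [hcastsub]
      _ ≤ N := hNlowR
  have r6 : N ≤ R * Q := by
    rw [hNdef, hRdef, hQdef]
    exact_mod_cast hNrq
  have hP0 : (0:ℝ) < P := by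
    rw [hPdef]
    have : 0 < primeProd r := Finset.prod_pos (fun i _ => (Nat.prime_nth_prime i).pos)
    exact_mod_cast this
  have hP1 : (1:ℝ) ≤ P := by
    rw [hPdef]
    have : 0 < primeProd r := Finset.prod_pos (fun i _ => (Nat.prime_nth_prime i).pos)
    exact_mod_cast this
  have hS0 : (0:ℝ) ≤ S := Real.log_nonneg hP1
  have r7 : S ≤ R * LQ := by
    have hc : P ≤ Q^r := by rw [hPdef, hQdef]; exact_mod_cast hPup
    have h1 : S ≤ Real.log (Q^r) := Real.log_le_log hP0 hc
    rw [Real.log_pow, ← hLQdef] at h1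
    rw [hRdef]
    exact_mod_cast h1
  have hS3Q : S ≤ 3*Q := by
    calc S ≤ R * LQ := r7
      _ ≤ 3*Q := r8
  -- S lower bound
  have hhr : h ≤ r := by omega
  have hh2 : (h:ℝ) ≤ R/2 := by
    rw [hRdef, hhdef]
    push_cast
    exact Nat.cast_div_le
  have hh3 : R ≤ 2*(h:ℝ) + 1 := by
    have : r ≤ 2*h + 1 := by omega
    rw [hRdef]; exact_mod_cast this
  have hlogh : LR/2 ≤ Real.log ((h:ℝ)+2) := by
    have hR20 : (0:ℝ) < R/2 := by linarith
    have h1 : Real.log (R/2) ≤ Real.log ((h:ℝ)+2) :=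
      Real.log_le_log hR20 (by linarith)
    have h2 : Real.log (R/2) = LR - Real.log 2 := by
      rw [Real.log_div (by linarith) (by norm_num), hLRdef]
    nlinarith only [h1, h2, hLR15, Real.log_two_lt_d9]
  have r9 : R*LR/4 ≤ S := by
    have hc : (((h+2 : ℕ)):ℝ)^(r-h) ≤ P := by rw [hPdef]; exact_mod_cast hPlow
    have h1 : ((r-h : ℕ):ℝ) * Real.log (((h+2:ℕ)):ℝ) ≤ S := by
      have := Real.log_le_log (by positivity) hc
      rwa [Real.log_pow] at this
    have h2 : ((r-h : ℕ):ℝ) = R - (h:ℝ) := by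
      rw [hRdef]; exact Nat.cast_sub hhr
    have h3 : (((h+2:ℕ)):ℝ) = (h:ℝ) + 2 := by push_cast; ring
    rw [h2, h3] at h1
    have h4 : R/2 ≤ R - (h:ℝ) := by linarith
    have h5 : (R/2) * (LR/2) ≤ (R - (h:ℝ)) * Real.log ((h:ℝ)+2) := by
      apply mul_le_mul h4 hlogh (by linarith) (by linarith)
    nlinarith only [h1, h5]
  -- N upper bound and log N
  have r11 : N ≤ 8*R^2*LR := by
    have h1 : Q ≤ 2*R*(4*LR) := by
      calc Q ≤ 2*R*LQ := hQ2RLQ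
        _ ≤ 2*R*(4*LR) := by
            apply mul_le_mul_of_nonneg_left hLQ4LR (by linarith)
    calc N ≤ R * Q := r6
      _ ≤ R * (2*R*(4*LR)) := by
          apply mul_le_mul_of_nonneg_left (by linarith) (by linarith)
      _ = 8*R^2*LR := by ring
  have hLRR : LR ≤ R := by
    have := Real.log_le_sub_one_of_pos (show (0:ℝ) < R by linarith)
    rw [← hLRdef] at this
    linarith
  have hNR4 : N ≤ R^4 := by
    have e1 : 8*R^2*LR ≤ 8*R^2*R := mul_le_mul_of_nonneg_left hLRR (by positivity)
    have e2 : 8*R^3 ≤ R*R^3 := mul_le_mul_of_nonneg_right hR8 (by positivity)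
    nlinarith only [r11, e1, e2]
  have hNQ : Q ≤ N := by
    rw [hNdef, hQdef]; exact_mod_cast hqN
  have hN0 : (0:ℝ) < N := by linarith
  have hLN_lo : LQ ≤ LN := by
    rw [hLNdef, hLQdef]
    exact Real.log_le_log hQ0 hNQ
  have r12 : LN ≤ 4*LR := by
    have h1 : LN ≤ Real.log (R^4) := by
      rw [hLNdef]; exact Real.log_le_log hN0 hNR4
    rw [Real.log_pow, ← hLRdef] at h1
    push_cast at h1
    linarith
  -- final inequalities
  have hA : S^2 ≤ 1156 * (N * LN) := by
    have h1 : Q^2/128 ≤ N * LQ := by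
      have := mul_le_mul_of_nonneg_right r5 (show (0:ℝ) ≤ LQ by linarith)
      have hLQne : LQ ≠ 0 := ne_of_gt (by linarith)
      have he : Q^2/(128*LQ) * LQ = Q^2/128 := by field_simp; try ring
      linarith [he ▸ this]
    have h2 : N * LQ ≤ N * LN := by
      apply mul_le_mul_of_nonneg_left hLN_lo (by linarith)
    have hSQ2 : S^2 ≤ 9*Q^2 := by nlinarith only [hS3Q, hS0, hQ0]
    linarith only [hSQ2, h1, h2, pow_pos hQ0 2]
  have hB : N * LN ≤ 529 * S^2 := by
    have h1 : N * LN ≤ (8*R^2*LR) * (4*LR) := by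
      apply mul_le_mul r11 r12 (by linarith) (by positivity)
    have h2 : (R*LR/4)^2 ≤ S^2 := by
      apply sq_le_sq' (by nlinarith only [r9, hLR0, hR8]) r9
    nlinarith only [h1, h2]
  have hNLN0 : (0:ℝ) ≤ N * LN := by positivity
  constructor
  · have h1 : Real.sqrt (N*LN) ≤ Real.sqrt ((23*S)^2) := by
      apply Real.sqrt_le_sqrt
      nlinarith only [hB]
    rwa [Real.sqrt_sq (by linarith)] at h1
  · have h1 : Real.sqrt (S^2) ≤ Real.sqrt (1156 * (N*LN)) := Real.sqrt_le_sqrt hA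
    rw [Real.sqrt_sq hS0] at h1
    have h2 : Real.sqrt (1156 * (N*LN)) = 34 * Real.sqrt (N*LN) := by
      rw [Real.sqrt_mul (by norm_num), show (1156:ℝ) = 34^2 by norm_num, Real.sqrt_sq (by norm_num)]
    rw [h2] at h1
    exact h1


theorem stmt19 :
    ∃ c₁ c₂ : ℝ, 0 < c₁ ∧ 0 < c₂ ∧ ∀ r : ℕ, 2 ≤ r →
      (2 : ℝ) ^ (c₁ * Real.sqrt ((primeSum r : ℝ) * Real.log (primeSum r)))
          ≤ (primeProd r : ℝ) ∧
        (primeProd r : ℝ)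
          ≤ (2 : ℝ) ^ (c₂ * Real.sqrt ((primeSum r : ℝ) * Real.log (primeSum r))) := by
  set f : ℕ → ℝ := fun r =>
    Real.logb 2 (primeProd r) / Real.sqrt ((primeSum r : ℝ) * Real.log (primeSum r)) with hf
  -- generic facts for r ≥ 2
  have hN5 : ∀ r : ℕ, 2 ≤ r → 5 ≤ primeSum r := by
    intro r hr
    have h1 : ∑ i ∈ Finset.range r, (i+2) ≤ primeSum r :=
      Finset.sum_le_sum (fun i _ => Nat.add_two_le_nth_prime i)
    have h2 : ∑ i ∈ Finset.range 2, (i+2) ≤ ∑ i ∈ Finset.range r, (i+2) := by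
      apply Finset.sum_le_sum_of_subset
      exact Finset.range_subset_range.2 hr
    simpa [Finset.sum_range_succ] using le_trans h2 h1
  have hP4 : ∀ r : ℕ, 2 ≤ r → 4 ≤ primeProd r := by
    intro r hr
    have h1 : ∏ i ∈ Finset.range r, 2 ≤ primeProd r :=
      Finset.prod_le_prod' (fun i _ => (Nat.prime_nth_prime i).two_le)
    have h2 : (4:ℕ) = 2^2 := by norm_num
    have h3 : (2:ℕ)^2 ≤ 2^r := Nat.pow_le_pow_right (by norm_num) hr
    simp only [Finset.prod_const, Finset.card_range] at h1
    omega
  have hsq_pos : ∀ r : ℕ, 2 ≤ r →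
      0 < Real.sqrt ((primeSum r : ℝ) * Real.log (primeSum r)) := by
    intro r hr
    have h5 : (5:ℝ) ≤ (primeSum r : ℝ) := by exact_mod_cast hN5 r hr
    have hL : 0 < Real.log (primeSum r : ℝ) := Real.log_pos (by linarith)
    apply Real.sqrt_pos.2
    nlinarith
  have hlogb_pos : ∀ r : ℕ, 2 ≤ r → 0 < Real.logb 2 (primeProd r : ℝ) := by
    intro r hr
    apply Real.logb_pos (by norm_num)
    have := hP4 r hr
    have h4 : (4:ℝ) ≤ (primeProd r : ℝ) := by exact_mod_cast this
    linarith
  have hfpos : ∀ r ∈ Finset.Ico 2 (2^22), 0 < f r := by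
    intro r hrm
    have hr2 : 2 ≤ r := (Finset.mem_Ico.1 hrm).1
    exact div_pos (hlogb_pos r hr2) (hsq_pos r hr2)
  have hne : (Finset.Ico 2 (2^22) : Finset ℕ).Nonempty := ⟨2, by norm_num⟩
  refine ⟨min (1/23) ((Finset.Ico 2 (2^22)).inf' hne f),
    max 50 ((Finset.Ico 2 (2^22)).sup' hne f), ?_, ?_, ?_⟩
  · apply lt_min (by norm_num)
    exact (Finset.lt_inf'_iff hne).2 hfpos
  · exact lt_max_of_lt_left (by norm_num)
  · intro r hr2
    set sq := Real.sqrt ((primeSum r : ℝ) * Real.log (primeSum r)) with hsq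
    have hsq0 : 0 < sq := hsq_pos r hr2
    have hP0 : (0:ℝ) < (primeProd r : ℝ) := by
      have := hP4 r hr2
      have h4 : (4:ℝ) ≤ (primeProd r : ℝ) := by exact_mod_cast this
      linarith
    have hP4R : (4:ℝ) ≤ (primeProd r : ℝ) := by exact_mod_cast hP4 r hr2
    have hPeq : (2:ℝ) ^ (Real.logb 2 (primeProd r : ℝ)) = (primeProd r : ℝ) :=
      Real.rpow_logb (by norm_num) (by norm_num) hP0
    have hmono : ∀ a b : ℝ, a ≤ b → (2:ℝ)^a ≤ (2:ℝ)^b := by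
      intro a b hab
      exact Real.rpow_le_rpow_left_iff (by norm_num : (1:ℝ) < 2) |>.2 hab
    constructor
    · -- lower bound
      rw [← hPeq]
      apply hmono
      rcases le_or_gt (2^22) r with hbig | hsmall
      · have hk := (key hbig).1
        have hS0 : 0 ≤ Real.log (primeProd r : ℝ) := Real.log_nonneg (by linarith)
        have hc1 : min (1/23) ((Finset.Ico 2 (2^22)).inf' hne f) ≤ 1/23 := min_le_left _ _
        have h1 : min (1/23) ((Finset.Ico 2 (2^22)).inf' hne f) * sq ≤ (1/23) * sq := by
          apply mul_le_mul_of_nonneg_right hc1 hsq0.le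
        have h2 : (1/23) * sq ≤ Real.log (primeProd r : ℝ) := by
          rw [hsq]; linarith [hk]
        have h3 : Real.log (primeProd r : ℝ) ≤ Real.logb 2 (primeProd r : ℝ) := by
          rw [← Real.log_div_log]
          rw [le_div_iff₀ (Real.log_pos (by norm_num))]
          nlinarith only [Real.log_two_lt_d9, hS0]
        linarith
      · have hrm : r ∈ Finset.Ico 2 (2^22) := Finset.mem_Ico.2 ⟨hr2, hsmall⟩
        have hc1 : min (1/23) ((Finset.Ico 2 (2^22)).inf' hne f) ≤ f r :=
          le_trans (min_le_right _ _) (Finset.inf'_le f hrm)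
        have h1 : min (1/23) ((Finset.Ico 2 (2^22)).inf' hne f) * sq ≤ f r * sq :=
          mul_le_mul_of_nonneg_right hc1 hsq0.le
        have h2 : f r * sq = Real.logb 2 (primeProd r : ℝ) := by
          show Real.logb 2 (primeProd r : ℝ) / sq * sq = _
          exact div_mul_cancel₀ _ hsq0.ne'
        linarith
    · -- upper bound
      rw [← hPeq]
      apply hmono
      rcases le_or_gt (2^22) r with hbig | hsmall
      · have hk := (key hbig).2
        have hS0 : 0 ≤ Real.log (primeProd r : ℝ) := Real.log_nonneg (by linarith)
        have h3 : Real.logb 2 (primeProd r : ℝ) ≤ 50/34 * Real.log (primeProd r : ℝ) := by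
          rw [← Real.log_div_log]
          rw [div_le_iff₀ (Real.log_pos (by norm_num))]
          nlinarith only [Real.log_two_gt_d9, hS0]
        have h4 : Real.logb 2 (primeProd r : ℝ) ≤ 50 * sq := by
          rw [hsq]
          calc Real.logb 2 (primeProd r : ℝ) ≤ 50/34 * Real.log (primeProd r : ℝ) := h3
            _ ≤ 50/34 * (34 * Real.sqrt ((primeSum r : ℝ) * Real.log (primeSum r))) := by
                apply mul_le_mul_of_nonneg_left hk (by norm_num)
            _ = 50 * Real.sqrt ((primeSum r : ℝ) * Real.log (primeSum r)) := by ring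
        have hc2 : (50:ℝ) ≤ max 50 ((Finset.Ico 2 (2^22)).sup' hne f) := le_max_left _ _
        have h5 : 50 * sq ≤ max 50 ((Finset.Ico 2 (2^22)).sup' hne f) * sq :=
          mul_le_mul_of_nonneg_right hc2 hsq0.le
        linarith
      · have hrm : r ∈ Finset.Ico 2 (2^22) := Finset.mem_Ico.2 ⟨hr2, hsmall⟩
        have hc2 : f r ≤ max 50 ((Finset.Ico 2 (2^22)).sup' hne f) :=
          le_trans (Finset.le_sup' f hrm) (le_max_right _ _)
        have h1 : f r * sq ≤ max 50 ((Finset.Ico 2 (2^22)).sup' hne f) * sq :=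
          mul_le_mul_of_nonneg_right hc2 hsq0.le
        have h2 : f r * sq = Real.logb 2 (primeProd r : ℝ) := by
          show Real.logb 2 (primeProd r : ℝ) / sq * sq = _
          exact div_mul_cancel₀ _ hsq0.ne'
        linarith
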